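/- The tree-cost function on e-graphs, defined as the least fixed point T(c) = min over e-nodes v in class c of (node_cost(v) + Σ_{k ∈ children(v)} T(k)), satisfies T(c) ≤ cost of every term (expression tree) rooted at class c, and equals the minimum tree cost over all terms extractable from class c, provided the e-graph admits at least one finite term from each class. -/

import Mathlib

/-- `HasTermCost cl nodeCost children c n` means there is a term (finite expression tree)
extractable from e-class `c` whose tree cost is `n`: one chooses an e-node `v` of class `c`
and, recursively, terms from each child class of `v`; the tree cost is `node_cost v` plus
the sum of the tree costs of the chosen subterms. -/
inductive HasTermCost {V C : Type*} (cl : V → C) (nodeCost : V → ℕ)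
    (children : V → List C) : C → ℕ → Prop
  | mk (v : V) (costs : List ℕ)
      (h : List.Forall₂ (HasTermCost cl nodeCost children) (children v) costs) :
      HasTermCost cl nodeCost children (cl v) (nodeCost v + costs.sum)

/-- The tree-cost function `T`, the least fixed point of
`T c = min over e-nodes v in class c of (node_cost v + Σ_{k ∈ children v} T k)`,
is a lower bound on the tree cost of every term extractable from class `c`, and—provided
every class admits at least one finite term—`T c` equals the minimum tree cost over all
terms extractable from `c`. -/
theorem tree_cost_lfp_is_min_term_cost {V C : Type*} [Fintype V] [DecidableEq C]
    (cl : V → C) (nodeCost : V → ℕ) (children : V → List C)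
    (hpos : ∀ v, 0 < nodeCost v)
    (T : C → ℕ∞)
    (hfix : ∀ c, T c = (Finset.univ.filter (fun v => cl v = c)).inf
        fun v => (nodeCost v : ℕ∞) + ((children v).map T).sum)
    (hleast : ∀ S : C → ℕ∞,
      (∀ c, S c = (Finset.univ.filter (fun v => cl v = c)).inf
        fun v => (nodeCost v : ℕ∞) + ((children v).map S).sum) → T ≤ S)
    (hterm : ∀ c : C, ∃ n : ℕ, HasTermCost cl nodeCost children c n) :
    (∀ c n, HasTermCost cl nodeCost children c n → T c ≤ (n : ℕ∞)) ∧
    (∀ c, T c = sInf {x : ℕ∞ | ∃ n : ℕ, HasTermCost cl nodeCost children c n ∧ x = (n : ℕ∞)}) := by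
  -- sum comparison helper
  have key : ∀ (l : List C) (cs : List ℕ),
      List.Forall₂ (HasTermCost cl nodeCost children) l cs →
      (∀ m ∈ cs, ∀ c', HasTermCost cl nodeCost children c' m → T c' ≤ (m : ℕ∞)) →
      (l.map T).sum ≤ (cs.sum : ℕ∞) := by
    intro l cs h
    induction h with
    | nil => simp
    | @cons a b l' cs' h₁ h₂ ih =>
      intro hIH
      simp only [List.map_cons, List.sum_cons, Nat.cast_add]
      exact add_le_add (hIH _ List.mem_cons_self _ h₁)
        (ih fun m hm => hIH m (List.mem_cons_of_mem _ hm))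
  -- Part 1
  have part1 : ∀ c n, HasTermCost cl nodeCost children c n → T c ≤ (n : ℕ∞) := by
    intro c n
    induction n using Nat.strong_induction_on generalizing c with
    | _ n IH =>
      intro h
      cases h with
      | mk v costs hf =>
        rw [hfix (cl v)]
        have hmem : v ∈ Finset.univ.filter (fun w => cl w = cl v) := by simp
        refine le_trans (Finset.inf_le hmem) ?_
        rw [Nat.cast_add]
        refine add_le_add_right ?_ _
        refine key _ _ hf ?_
        intro m hm c' h'
        refine IH m ?_ c' h'
        have hle : m ≤ costs.sum := List.le_sum_of_mem hm
        have := hpos v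
        omega
  refine ⟨part1, ?_⟩
  -- extraction helper
  have build : ∀ l : List C,
      (∀ k ∈ l, ∃ m : ℕ, (m : ℕ∞) ≤ T k ∧ HasTermCost cl nodeCost children k m) →
      ∃ cs : List ℕ, List.Forall₂ (HasTermCost cl nodeCost children) l cs ∧
        (cs.sum : ℕ∞) ≤ (l.map T).sum := by
    intro l
    induction l with
    | nil => intro _; exact ⟨[], List.Forall₂.nil, by simp⟩
    | cons a l' ih =>
      intro hl
      obtain ⟨m, hm1, hm2⟩ := hl a List.mem_cons_self
      obtain ⟨cs, hcs1, hcs2⟩ := ih fun k hk => hl k (List.mem_cons_of_mem _ hk)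
      refine ⟨m :: cs, List.Forall₂.cons hm2 hcs1, ?_⟩
      simp only [List.map_cons, List.sum_cons, Nat.cast_add]
      exact add_le_add hm1 hcs2
  have ext : ∀ n : ℕ, ∀ c, T c ≤ (n : ℕ∞) →
      ∃ m : ℕ, m ≤ n ∧ HasTermCost cl nodeCost children c m := by
    intro n
    induction n using Nat.strong_induction_on with
    | _ n IH =>
      intro c hc
      rw [hfix c] at hc
      obtain ⟨v, hv, hval⟩ := (Finset.inf_le_iff (by exact WithTop.coe_lt_top n)).mp hc
      have hclv : cl v = c := by simpa using hv
      have hchild : ∀ k ∈ children v, ∃ m : ℕ, (m : ℕ∞) ≤ T k ∧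
          HasTermCost cl nodeCost children k m := by
        intro k hk
        have h1 : T k ≤ ((children v).map T).sum :=
          List.single_le_sum (fun x _ => zero_le) _ (List.mem_map_of_mem hk)
        have h2 : (nodeCost v : ℕ∞) + T k ≤ (n : ℕ∞) :=
          le_trans (add_le_add_right h1 _) hval
        have h3 : (1 : ℕ∞) + T k ≤ (n : ℕ∞) := by
          refine le_trans (add_le_add_left ?_ _) h2
          exact_mod_cast hpos v
        have hne : T k ≠ ⊤ := by
          intro htop
          rw [htop] at h3
          simp at h3
        obtain ⟨t, ht⟩ := WithTop.ne_top_iff_exists.mp hne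
        have htlt : t < n := by
          rw [← ht] at h3
          have : ((1 + t : ℕ) : ℕ∞) ≤ (n : ℕ∞) := by push_cast; exact h3
          have := Nat.cast_le.mp this
          omega
        obtain ⟨m, hm1, hm2⟩ := IH t htlt k (le_of_eq ht.symm)
        exact ⟨m, ht ▸ Nat.cast_le.mpr hm1, hm2⟩
      obtain ⟨cs, hcs1, hcs2⟩ := build (children v) hchild
      refine ⟨nodeCost v + cs.sum, ?_, by rw [← hclv]; exact HasTermCost.mk v cs hcs1⟩
      have : ((nodeCost v + cs.sum : ℕ) : ℕ∞) ≤ (n : ℕ∞) := by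
        rw [Nat.cast_add]
        exact le_trans (add_le_add_right hcs2 _) hval
      exact_mod_cast this
  intro c
  refine le_antisymm (le_sInf ?_) ?_
  · rintro x ⟨n, hn, rfl⟩
    exact part1 c n hn
  · obtain ⟨n0, h0⟩ := hterm c
    have hne : T c ≠ ⊤ := fun htop => by
      have := part1 c n0 h0
      rw [htop] at this
      simp at this
    obtain ⟨t, ht⟩ := WithTop.ne_top_iff_exists.mp hne
    obtain ⟨m, hm1, hm2⟩ := ext t c (le_of_eq ht.symm)
    exact le_trans (sInf_le ⟨m, hm2, rfl⟩) (ht ▸ Nat.cast_le.mpr hm1)
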